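/- The trace language of every interaction is regular: for every interaction i ∈ I, there exists a nondeterministic finite automaton over the alphabet A, with a finite set of states, whose recognized language is exactly σ(i). -/

import Mathlib

/-- An atomic communication action: the emission (`isEmission = true`) or
reception (`isEmission = false`) of a message on a lifeline. -/
structure MyAction (L M : Type) where
  lifeline : L
  isEmission : Bool
  message : M

/-- Interaction terms: constants are actions and the empty interaction,
`loopS` is unary, and `strict`, `alt` and `cr ℓ` (for every `ℓ ⊆ L`) are binary.
`seq = cr ∅` and `par = cr Set.univ`. -/
inductive Interaction (L M : Type) : Type where
  | empty : Interaction L M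
  | act : MyAction L M → Interaction L M
  | loopS : Interaction L M → Interaction L M
  | strict : Interaction L M → Interaction L M → Interaction L M
  | alt : Interaction L M → Interaction L M → Interaction L M
  | cr : Set L → Interaction L M → Interaction L M → Interaction L M

namespace Interaction

variable {L M : Type}

/-- The evasion predicate `i ↓ ℓ`. -/
inductive Evades : Interaction L M → Set L → Prop where
  | empty (ℓ : Set L) : Evades .empty ℓ
  | act (a : MyAction L M) (ℓ : Set L) : a.lifeline ∉ ℓ → Evades (.act a) ℓ
  | altL {i1 i2 : Interaction L M} {ℓ} : Evades i1 ℓ → Evades (.alt i1 i2) ℓ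
  | altR {i1 i2 : Interaction L M} {ℓ} : Evades i2 ℓ → Evades (.alt i1 i2) ℓ
  | strict {i1 i2 : Interaction L M} {ℓ} : Evades i1 ℓ → Evades i2 ℓ →
      Evades (.strict i1 i2) ℓ
  | cr {i1 i2 : Interaction L M} {ℓ' ℓ} : Evades i1 ℓ → Evades i2 ℓ →
      Evades (.cr ℓ' i1 i2) ℓ
  | loopS (i1 : Interaction L M) (ℓ : Set L) : Evades (.loopS i1) ℓ

/-- The pruning relation `i ⤳ℓ i'`. -/
inductive Prune : Interaction L M → Set L → Interaction L M → Prop where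
  | empty (ℓ : Set L) : Prune .empty ℓ .empty
  | act (a : MyAction L M) (ℓ : Set L) : a.lifeline ∉ ℓ → Prune (.act a) ℓ (.act a)
  | altL {i1 i2 i1' : Interaction L M} {ℓ} : Prune i1 ℓ i1' → ¬ Evades i2 ℓ →
      Prune (.alt i1 i2) ℓ i1'
  | altR {i1 i2 i2' : Interaction L M} {ℓ} : Prune i2 ℓ i2' → ¬ Evades i1 ℓ →
      Prune (.alt i1 i2) ℓ i2'
  | altBoth {i1 i2 i1' i2' : Interaction L M} {ℓ} : Prune i1 ℓ i1' → Prune i2 ℓ i2' →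
      Prune (.alt i1 i2) ℓ (.alt i1' i2')
  | strict {i1 i2 i1' i2' : Interaction L M} {ℓ} : Prune i1 ℓ i1' → Prune i2 ℓ i2' →
      Prune (.strict i1 i2) ℓ (.strict i1' i2')
  | cr {i1 i2 i1' i2' : Interaction L M} {ℓ' ℓ} : Prune i1 ℓ i1' → Prune i2 ℓ i2' →
      Prune (.cr ℓ' i1 i2) ℓ (.cr ℓ' i1' i2')
  | loopS {i1 i1' : Interaction L M} {ℓ} : Prune i1 ℓ i1' →
      Prune (.loopS i1) ℓ (.loopS i1')
  | loopSElim {i1 : Interaction L M} {ℓ} : ¬ Evades i1 ℓ → Prune (.loopS i1) ℓ .empty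

/-- The non-expression predicate `i ̸→a`. -/
inductive NoExpr : Interaction L M → MyAction L M → Prop where
  | empty (a : MyAction L M) : NoExpr .empty a
  | act {a' a : MyAction L M} : a' ≠ a → NoExpr (.act a') a
  | loopS {i1 : Interaction L M} {a} : NoExpr i1 a → NoExpr (.loopS i1) a
  | strictNoEvade {i1 i2 : Interaction L M} {a} : NoExpr i1 a →
      ¬ Evades i1 Set.univ → NoExpr (.strict i1 i2) a
  | strictBoth {i1 i2 : Interaction L M} {a} : NoExpr i1 a →
      NoExpr i2 a → NoExpr (.strict i1 i2) a
  | crNoEvade {i1 i2 : Interaction L M} {ℓ a} : NoExpr i1 a →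
      ¬ Evades i1 ({a.lifeline} \ ℓ) → NoExpr (.cr ℓ i1 i2) a
  | crBoth {i1 i2 : Interaction L M} {ℓ a} : NoExpr i1 a →
      NoExpr i2 a → NoExpr (.cr ℓ i1 i2) a
  | alt {i1 i2 : Interaction L M} {a} : NoExpr i1 a → NoExpr i2 a →
      NoExpr (.alt i1 i2) a

/-- The execution relation `i →a i'`. -/
inductive Exec : Interaction L M → MyAction L M → Interaction L M → Prop where
  | act (a : MyAction L M) : Exec (.act a) a .empty
  | loop {i1 i1' : Interaction L M} {a} : Exec i1 a i1' →
      Exec (.loopS i1) a (.strict i1' (.loopS i1))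
  | strictL {i1 i2 i1' : Interaction L M} {a} : Exec i1 a i1' →
      Exec (.strict i1 i2) a (.strict i1' i2)
  | crL {i1 i2 i1' : Interaction L M} {ℓ a} : Exec i1 a i1' →
      Exec (.cr ℓ i1 i2) a (.cr ℓ i1' i2)
  | strictR {i1 i2 i2' : Interaction L M} {a} : Exec i2 a i2' → Evades i1 Set.univ →
      Exec (.strict i1 i2) a i2'
  | crR {i1 i2 i1' i2' : Interaction L M} {ℓ a} : Exec i2 a i2' →
      Prune i1 ({a.lifeline} \ ℓ) i1' → Exec (.cr ℓ i1 i2) a (.cr ℓ i1' i2')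
  | altChoiceL {i1 i2 i1' : Interaction L M} {a} : Exec i1 a i1' → NoExpr i2 a →
      Exec (.alt i1 i2) a i1'
  | altChoiceR {i1 i2 i2' : Interaction L M} {a} : Exec i2 a i2' → NoExpr i1 a →
      Exec (.alt i1 i2) a i2'
  | altDelay {i1 i2 i1' i2' : Interaction L M} {a} : Exec i1 a i1' → Exec i2 a i2' →
      Exec (.alt i1 i2) a (.alt i1' i2')

/-- The trace semantics `σ(i)`, as a predicate: `Sem i t` iff `t ∈ σ(i)`. -/
inductive Sem : Interaction L M → List (MyAction L M) → Prop where
  | nil {i : Interaction L M} : Evades i Set.univ → Sem i []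
  | cons {i i' : Interaction L M} {a t} : Exec i a i' → Sem i' t → Sem i (a :: t)

/-- One execution step: `i → i'` iff `i →a i'` for some action `a`. -/
def Step (i i' : Interaction L M) : Prop := ∃ a, Exec i a i'

/-- `reach i = { i' | i →* i' }`. -/
def Reach (i : Interaction L M) : Set (Interaction L M) :=
  {i' | Relation.ReflTransGen Step i i'}

/-- One-step rewriting by the simplification system `R`, closed under contexts. -/
inductive Rw : Interaction L M → Interaction L M → Prop where
  | strictEmptyL (x : Interaction L M) : Rw (.strict .empty x) x
  | strictEmptyR (x : Interaction L M) : Rw (.strict x .empty) x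
  | crEmptyL (ℓ : Set L) (x : Interaction L M) : Rw (.cr ℓ .empty x) x
  | crEmptyR (ℓ : Set L) (x : Interaction L M) : Rw (.cr ℓ x .empty) x
  | altEmptyLoop (x : Interaction L M) : Rw (.alt .empty (.loopS x)) (.loopS x)
  | altLoopEmpty (x : Interaction L M) : Rw (.alt (.loopS x) .empty) (.loopS x)
  | altEmptyEmpty : Rw (Interaction.alt (L := L) (M := M) .empty .empty) .empty
  | loopEmpty : Rw (Interaction.loopS (L := L) (M := M) .empty) .empty
  | loopCongr {i i' : Interaction L M} : Rw i i' → Rw (.loopS i) (.loopS i')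
  | strictCongrL {i1 i1' i2 : Interaction L M} : Rw i1 i1' →
      Rw (.strict i1 i2) (.strict i1' i2)
  | strictCongrR {i1 i2 i2' : Interaction L M} : Rw i2 i2' →
      Rw (.strict i1 i2) (.strict i1 i2')
  | altCongrL {i1 i1' i2 : Interaction L M} : Rw i1 i1' → Rw (.alt i1 i2) (.alt i1' i2)
  | altCongrR {i1 i2 i2' : Interaction L M} : Rw i2 i2' → Rw (.alt i1 i2) (.alt i1 i2')
  | crCongrL {i1 i1' i2 : Interaction L M} {ℓ} : Rw i1 i1' →
      Rw (.cr ℓ i1 i2) (.cr ℓ i1' i2)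
  | crCongrR {i1 i2 i2' : Interaction L M} {ℓ} : Rw i2 i2' →
      Rw (.cr ℓ i1 i2) (.cr ℓ i1 i2')

end Interaction

open Interaction
namespace Interaction
variable {L M : Type}

theorem Evades.anti : ∀ {i : Interaction L M} {s}, Evades i s →
    ∀ {s'}, s' ⊆ s → Evades i s' := by
  intro i s h
  induction h with
  | empty => exact fun _ => .empty _
  | act a ℓ h => exact fun hss => .act a _ (fun hc => h (hss hc))
  | altL _ ih => exact fun hss => .altL (ih hss)
  | altR _ ih => exact fun hss => .altR (ih hss)
  | strict _ _ ih1 ih2 => exact fun hss => .strict (ih1 hss) (ih2 hss)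
  | cr _ _ ih1 ih2 => exact fun hss => .cr (ih1 hss) (ih2 hss)
  | loopS => exact fun _ => .loopS _ _

theorem Evades.act_inv {a : MyAction L M} {s} (h : Evades (.act a) s) :
    a.lifeline ∉ s := by cases h with | act _ _ h => exact h

theorem Evades.strict_inv {i1 i2 : Interaction L M} {s} (h : Evades (.strict i1 i2) s) :
    Evades i1 s ∧ Evades i2 s := by cases h with | strict h1 h2 => exact ⟨h1, h2⟩

theorem Evades.cr_inv {i1 i2 : Interaction L M} {ℓ s} (h : Evades (.cr ℓ i1 i2) s) :
    Evades i1 s ∧ Evades i2 s := by cases h with | cr h1 h2 => exact ⟨h1, h2⟩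

theorem Evades.alt_inv {i1 i2 : Interaction L M} {s} (h : Evades (.alt i1 i2) s) :
    Evades i1 s ∨ Evades i2 s := by
  cases h with
  | altL h => exact Or.inl h
  | altR h => exact Or.inr h

theorem Prune.evades : ∀ {i : Interaction L M} {s i'}, Prune i s i' → Evades i s := by
  intro i s i' h
  induction h with
  | empty => exact .empty _
  | act a s h => exact .act a s h
  | altL _ _ ih => exact .altL ih
  | altR _ _ ih => exact .altR ih
  | altBoth _ _ ih1 _ => exact .altL ih1
  | strict _ _ ih1 ih2 => exact .strict ih1 ih2
  | cr _ _ ih1 ih2 => exact .cr ih1 ih2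
  | loopS _ _ => exact .loopS _ _
  | loopSElim _ => exact .loopS _ _

theorem prune_exists : ∀ (i : Interaction L M) (s), Evades i s → ∃ i', Prune i s i' := by
  intro i
  induction i with
  | empty => exact fun s _ => ⟨_, .empty s⟩
  | act a => exact fun s h => ⟨_, .act a s h.act_inv⟩
  | loopS i1 ih =>
    intro s _
    rcases Classical.em (Evades i1 s) with h1 | h1
    · rcases ih s h1 with ⟨i1', hp⟩; exact ⟨_, .loopS hp⟩
    · exact ⟨_, .loopSElim h1⟩
  | strict i1 i2 ih1 ih2 =>
    intro s h
    rcases h.strict_inv with ⟨h1, h2⟩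
    rcases ih1 s h1 with ⟨i1', hp1⟩; rcases ih2 s h2 with ⟨i2', hp2⟩
    exact ⟨_, .strict hp1 hp2⟩
  | alt i1 i2 ih1 ih2 =>
    intro s h
    rcases Classical.em (Evades i1 s) with h1 | h1 <;>
      rcases Classical.em (Evades i2 s) with h2 | h2
    · rcases ih1 s h1 with ⟨i1', hp1⟩; rcases ih2 s h2 with ⟨i2', hp2⟩
      exact ⟨_, .altBoth hp1 hp2⟩
    · rcases ih1 s h1 with ⟨i1', hp1⟩; exact ⟨_, .altL hp1 h2⟩
    · rcases ih2 s h2 with ⟨i2', hp2⟩; exact ⟨_, .altR hp2 h1⟩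
    · rcases h.alt_inv with h | h <;> [exact absurd h h1; exact absurd h h2]
  | cr ℓ i1 i2 ih1 ih2 =>
    intro s h
    rcases h.cr_inv with ⟨h1, h2⟩
    rcases ih1 s h1 with ⟨i1', hp1⟩; rcases ih2 s h2 with ⟨i2', hp2⟩
    exact ⟨_, .cr hp1 hp2⟩

theorem Prune.evades_iff : ∀ {i : Interaction L M} {s i'}, Prune i s i' →
    ∀ s', (Evades i' s' ↔ Evades i (s ∪ s')) := by
  intro i s i' h
  induction h with
  | empty => exact fun s' => ⟨fun _ => .empty _, fun _ => .empty _⟩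
  | act a s h =>
    intro s'
    constructor
    · intro h'
      exact .act a _ (fun hc => ((Set.mem_union _ _ _).mp hc).elim h h'.act_inv)
    · intro h'
      exact .act a _ (fun hc => h'.act_inv ((Set.mem_union _ _ _).mpr (Or.inr hc)))
  | altL hp hne ih =>
    intro s'
    constructor
    · intro h'; exact .altL ((ih s').mp h')
    · intro h'
      rcases h'.alt_inv with h1 | h2
      · exact (ih s').mpr h1
      · exact absurd (h2.anti Set.subset_union_left) hne
  | altR hp hne ih =>
    intro s'
    constructor
    · intro h'; exact .altR ((ih s').mp h')
    · intro h'
      rcases h'.alt_inv with h1 | h2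
      · exact absurd (h1.anti Set.subset_union_left) hne
      · exact (ih s').mpr h2
  | altBoth hp1 hp2 ih1 ih2 =>
    intro s'
    constructor
    · intro h'
      rcases h'.alt_inv with h | h
      · exact .altL ((ih1 s').mp h)
      · exact .altR ((ih2 s').mp h)
    · intro h'
      rcases h'.alt_inv with h | h
      · exact .altL ((ih1 s').mpr h)
      · exact .altR ((ih2 s').mpr h)
  | strict hp1 hp2 ih1 ih2 =>
    intro s'
    constructor
    · intro h'
      rcases h'.strict_inv with ⟨h1, h2⟩
      exact .strict ((ih1 s').mp h1) ((ih2 s').mp h2)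
    · intro h'
      rcases h'.strict_inv with ⟨h1, h2⟩
      exact .strict ((ih1 s').mpr h1) ((ih2 s').mpr h2)
  | cr hp1 hp2 ih1 ih2 =>
    intro s'
    constructor
    · intro h'
      rcases h'.cr_inv with ⟨h1, h2⟩
      exact .cr ((ih1 s').mp h1) ((ih2 s').mp h2)
    · intro h'
      rcases h'.cr_inv with ⟨h1, h2⟩
      exact .cr ((ih1 s').mpr h1) ((ih2 s').mpr h2)
  | loopS _ _ => exact fun s' => ⟨fun _ => .loopS _ _, fun _ => .loopS _ _⟩
  | loopSElim _ => exact fun s' => ⟨fun _ => .loopS _ _, fun _ => .empty _⟩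

theorem Prune.det : ∀ {i : Interaction L M} {s x}, Prune i s x →
    ∀ {y}, Prune i s y → x = y := by
  intro i s x h
  induction h with
  | empty => intro y hy; cases hy; rfl
  | act a s h => intro y hy; cases hy; rfl
  | altL hp hne ih =>
    intro y hy
    cases hy with
    | altL hq _ => exact ih hq
    | altR hq hne' => exact absurd hp.evades hne'
    | altBoth hq1 hq2 => exact absurd hq2.evades hne
  | altR hp hne ih =>
    intro y hy
    cases hy with
    | altL hq hne' => exact absurd hp.evades hne'
    | altR hq _ => exact ih hq
    | altBoth hq1 hq2 => exact absurd hq1.evades hne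
  | altBoth hp1 hp2 ih1 ih2 =>
    intro y hy
    cases hy with
    | altL hq hne' => exact absurd hp2.evades hne'
    | altR hq hne' => exact absurd hp1.evades hne'
    | altBoth hq1 hq2 => rw [ih1 hq1, ih2 hq2]
  | strict hp1 hp2 ih1 ih2 =>
    intro y hy; cases hy with | strict hq1 hq2 => rw [ih1 hq1, ih2 hq2]
  | cr hp1 hp2 ih1 ih2 =>
    intro y hy; cases hy with | cr hq1 hq2 => rw [ih1 hq1, ih2 hq2]
  | loopS hp ih =>
    intro y hy
    cases hy with
    | loopS hq => rw [ih hq]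
    | loopSElim hne => exact absurd hp.evades hne
  | loopSElim hne =>
    intro y hy
    cases hy with
    | loopS hq => exact absurd hq.evades hne
    | loopSElim _ => rfl

end Interaction
namespace Interaction
variable {L M : Type}

theorem Evades.union_comm {i : Interaction L M} {s s' : Set L}
    (h : Evades i (s ∪ s')) : Evades i (s' ∪ s) := Set.union_comm s s' ▸ h

theorem prune_comm : ∀ (i : Interaction L M) {s1 s2 i1' i2'},
    Prune i s1 i1' → Prune i s2 i2' → Evades i (s1 ∪ s2) →
    ∃ p, Prune i1' s2 p ∧ Prune i2' s1 p := by
  intro i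
  induction i with
  | empty =>
    intro s1 s2 i1' i2' h1 h2 _
    cases h1; cases h2; exact ⟨_, .empty _, .empty _⟩
  | act a =>
    intro s1 s2 i1' i2' h1 h2 _
    cases h1 with | act _ _ ha1 =>
    cases h2 with | act _ _ ha2 =>
    exact ⟨_, .act a _ ha2, .act a _ ha1⟩
  | loopS i1 ih =>
    intro s1 s2 i1' i2' h1 h2 hE
    cases h1 with
    | loopS ha =>
      cases h2 with
      | loopS hb =>
        rcases Classical.em (Evades i1 (s1 ∪ s2)) with hev | hev
        · rcases ih ha hb hev with ⟨p, hp1, hp2⟩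
          exact ⟨_, .loopS hp1, .loopS hp2⟩
        · refine ⟨_, .loopSElim ?_, .loopSElim ?_⟩
          · exact fun h => hev ((ha.evades_iff s2).mp h)
          · exact fun h => hev (((hb.evades_iff s1).mp h).union_comm)
      | loopSElim hne2 =>
        refine ⟨_, .loopSElim ?_, .empty _⟩
        exact fun h => hne2 (((ha.evades_iff s2).mp h).anti Set.subset_union_right)
    | loopSElim hne1 =>
      cases h2 with
      | loopS hb =>
        refine ⟨_, .empty _, .loopSElim ?_⟩
        exact fun h => hne1 (((hb.evades_iff s1).mp h).anti Set.subset_union_right)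
      | loopSElim _ => exact ⟨_, .empty _, .empty _⟩
  | strict j1 j2 ihj1 ihj2 =>
    intro s1 s2 i1' i2' h1 h2 hE
    rcases hE.strict_inv with ⟨hE1, hE2⟩
    cases h1 with | strict ha1 ha2 =>
    cases h2 with | strict hb1 hb2 =>
    rcases ihj1 ha1 hb1 hE1 with ⟨p1, hp1, hp1'⟩
    rcases ihj2 ha2 hb2 hE2 with ⟨p2, hp2, hp2'⟩
    exact ⟨_, .strict hp1 hp2, .strict hp1' hp2'⟩
  | cr ℓ j1 j2 ihj1 ihj2 =>
    intro s1 s2 i1' i2' h1 h2 hE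
    rcases hE.cr_inv with ⟨hE1, hE2⟩
    cases h1 with | cr ha1 ha2 =>
    cases h2 with | cr hb1 hb2 =>
    rcases ihj1 ha1 hb1 hE1 with ⟨p1, hp1, hp1'⟩
    rcases ihj2 ha2 hb2 hE2 with ⟨p2, hp2, hp2'⟩
    exact ⟨_, .cr hp1 hp2, .cr hp1' hp2'⟩
  | alt j1 j2 ihj1 ihj2 =>
    intro s1 s2 i1' i2' h1 h2 hE
    cases h1 with
    | altL ha1 hne1 =>
      -- Prune j1 s1 _, ¬ Evades j2 s1
      have hEj1 : Evades j1 (s1 ∪ s2) := by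
        rcases hE.alt_inv with h | h
        · exact h
        · exact absurd (h.anti Set.subset_union_left) hne1
      cases h2 with
      | altL hb1 hne2 =>
        rcases ihj1 ha1 hb1 hEj1 with ⟨p, hp1, hp2⟩
        exact ⟨p, hp1, hp2⟩
      | altR hb2 hne2 =>
        exact absurd (hEj1.anti Set.subset_union_right) hne2
      | altBoth hb1 hb2 =>
        rcases ihj1 ha1 hb1 hEj1 with ⟨p, hp1, hp2⟩
        refine ⟨p, hp1, .altL hp2 ?_⟩
        exact fun h => hne1 (((hb2.evades_iff s1).mp h).anti Set.subset_union_right)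
    | altR ha2 hne1 =>
      -- Prune j2 s1 _, ¬ Evades j1 s1
      have hEj2 : Evades j2 (s1 ∪ s2) := by
        rcases hE.alt_inv with h | h
        · exact absurd (h.anti Set.subset_union_left) hne1
        · exact h
      cases h2 with
      | altL hb1 hne2 =>
        exact absurd (hEj2.anti Set.subset_union_right) hne2
      | altR hb2 hne2 =>
        rcases ihj2 ha2 hb2 hEj2 with ⟨p, hp1, hp2⟩
        exact ⟨p, hp1, hp2⟩
      | altBoth hb1 hb2 =>
        rcases ihj2 ha2 hb2 hEj2 with ⟨p, hp1, hp2⟩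
        refine ⟨p, hp1, .altR hp2 ?_⟩
        exact fun h => hne1 (((hb1.evades_iff s1).mp h).anti Set.subset_union_right)
    | altBoth ha1 ha2 =>
      cases h2 with
      | altL hb1 hne2 =>
        have hEj1 : Evades j1 (s1 ∪ s2) := by
          rcases hE.alt_inv with h | h
          · exact h
          · exact absurd (h.anti Set.subset_union_right) hne2
        rcases ihj1 ha1 hb1 hEj1 with ⟨p, hp1, hp2⟩
        refine ⟨p, .altL hp1 ?_, hp2⟩
        exact fun h => hne2 (((ha2.evades_iff s2).mp h).anti Set.subset_union_right)
      | altR hb2 hne2 =>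
        have hEj2 : Evades j2 (s1 ∪ s2) := by
          rcases hE.alt_inv with h | h
          · exact absurd (h.anti Set.subset_union_right) hne2
          · exact h
        rcases ihj2 ha2 hb2 hEj2 with ⟨p, hp1, hp2⟩
        refine ⟨p, .altR hp1 ?_, hp2⟩
        exact fun h => hne2 (((ha1.evades_iff s2).mp h).anti Set.subset_union_right)
      | altBoth hb1 hb2 =>
        rcases Classical.em (Evades j1 (s1 ∪ s2)) with he1 | he1 <;>
          rcases Classical.em (Evades j2 (s1 ∪ s2)) with he2 | he2
        · rcases ihj1 ha1 hb1 he1 with ⟨p1, hp1, hp1'⟩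
          rcases ihj2 ha2 hb2 he2 with ⟨p2, hp2, hp2'⟩
          exact ⟨_, .altBoth hp1 hp2, .altBoth hp1' hp2'⟩
        · rcases ihj1 ha1 hb1 he1 with ⟨p1, hp1, hp1'⟩
          refine ⟨p1, .altL hp1 ?_, .altL hp1' ?_⟩
          · exact fun h => he2 ((ha2.evades_iff s2).mp h)
          · exact fun h => he2 (((hb2.evades_iff s1).mp h).union_comm)
        · rcases ihj2 ha2 hb2 he2 with ⟨p2, hp2, hp2'⟩
          refine ⟨p2, .altR hp2 ?_, .altR hp2' ?_⟩
          · exact fun h => he1 ((ha1.evades_iff s2).mp h)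
          · exact fun h => he1 (((hb1.evades_iff s1).mp h).union_comm)
        · rcases hE.alt_inv with h | h
          · exact absurd h he1
          · exact absurd h he2

theorem prune_seq {i : Interaction L M} {s1 s2 i' i''}
    (h1 : Prune i s1 i') (h2 : Prune i' s2 i'') :
    ∃ q, Prune i s2 q ∧ Prune q s1 i'' := by
  have hE : Evades i (s1 ∪ s2) := (h1.evades_iff s2).mp h2.evades
  rcases prune_exists i s2 (hE.anti Set.subset_union_right) with ⟨q, hq⟩
  rcases prune_comm i h1 hq hE with ⟨p, hp1, hp2⟩
  exact ⟨q, hq, hp1.det h2 ▸ hp2⟩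

theorem exec_reflects_evades : ∀ {i : Interaction L M} {a i'}, Exec i a i' →
    ∀ {s : Set L}, a.lifeline ∉ s → Evades i' s → Evades i s := by
  intro i a i' h
  induction h with
  | act a => exact fun ha _ => .act a _ ha
  | loop _ _ => exact fun _ _ => .loopS _ _
  | strictL _ ih =>
    intro s ha h'
    rcases h'.strict_inv with ⟨h1, h2⟩
    exact .strict (ih ha h1) h2
  | strictR _ hEv ih =>
    exact fun ha h' => .strict (hEv.anti (Set.subset_univ _)) (ih ha h')
  | crL _ ih =>
    intro s ha h'
    rcases h'.cr_inv with ⟨h1, h2⟩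
    exact .cr (ih ha h1) h2
  | crR _ hp ih =>
    intro s ha h'
    rcases h'.cr_inv with ⟨h1, h2⟩
    exact .cr (((hp.evades_iff s).mp h1).anti Set.subset_union_right) (ih ha h2)
  | altChoiceL _ _ ih => exact fun ha h' => .altL (ih ha h')
  | altChoiceR _ _ ih => exact fun ha h' => .altR (ih ha h')
  | altDelay _ _ ih1 ih2 =>
    intro s ha h'
    rcases h'.alt_inv with h | h
    · exact .altL (ih1 ha h)
    · exact .altR (ih2 ha h)

theorem noexpr_sound : ∀ {i : Interaction L M} {a}, NoExpr i a →
    ∀ {j}, Exec i a j → False := by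
  intro i a h
  induction h with
  | empty => intro j h; cases h
  | act hne => intro j h; cases h; exact hne rfl
  | loopS _ ih => intro j h; cases h with | loop h => exact ih h
  | strictNoEvade _ hne ih =>
    intro j h
    cases h with
    | strictL h => exact ih h
    | strictR _ hEv => exact hne hEv
  | strictBoth _ _ ih1 ih2 =>
    intro j h
    cases h with
    | strictL h => exact ih1 h
    | strictR h _ => exact ih2 h
  | crNoEvade _ hne ih =>
    intro j h
    cases h with
    | crL h => exact ih h
    | crR _ hp => exact hne hp.evades
  | crBoth _ _ ih1 ih2 =>
    intro j h
    cases h with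
    | crL h => exact ih1 h
    | crR h _ => exact ih2 h
  | alt _ _ ih1 ih2 =>
    intro j h
    cases h with
    | altChoiceL h _ => exact ih1 h
    | altChoiceR h _ => exact ih2 h
    | altDelay h1 _ => exact ih1 h1

theorem exec_total : ∀ (i : Interaction L M) (a), (∃ j, Exec i a j) ∨ NoExpr i a := by
  intro i
  induction i with
  | empty => exact fun a => Or.inr (.empty a)
  | act a' =>
    intro a
    rcases Classical.em (a' = a) with rfl | hne
    · exact Or.inl ⟨_, .act a'⟩
    · exact Or.inr (.act hne)
  | loopS i1 ih =>
    intro a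
    rcases ih a with ⟨j, h⟩ | h
    · exact Or.inl ⟨_, .loop h⟩
    · exact Or.inr (.loopS h)
  | strict i1 i2 ih1 ih2 =>
    intro a
    rcases ih1 a with ⟨j, h⟩ | h1
    · exact Or.inl ⟨_, .strictL h⟩
    rcases ih2 a with ⟨k, h2⟩ | h2
    · rcases Classical.em (Evades i1 Set.univ) with hEv | hEv
      · exact Or.inl ⟨_, .strictR h2 hEv⟩
      · exact Or.inr (.strictNoEvade h1 hEv)
    · exact Or.inr (.strictBoth h1 h2)
  | alt i1 i2 ih1 ih2 =>
    intro a
    rcases ih1 a with ⟨j, h1⟩ | h1 <;> rcases ih2 a with ⟨k, h2⟩ | h2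
    · exact Or.inl ⟨_, .altDelay h1 h2⟩
    · exact Or.inl ⟨_, .altChoiceL h1 h2⟩
    · exact Or.inl ⟨_, .altChoiceR h2 h1⟩
    · exact Or.inr (.alt h1 h2)
  | cr ℓ i1 i2 ih1 ih2 =>
    intro a
    rcases ih1 a with ⟨j, h⟩ | h1
    · exact Or.inl ⟨_, .crL h⟩
    rcases ih2 a with ⟨k, h2⟩ | h2
    · rcases Classical.em (Evades i1 ({a.lifeline} \ ℓ)) with hEv | hEv
      · rcases prune_exists i1 _ hEv with ⟨i1', hp⟩
        exact Or.inl ⟨_, .crR h2 hp⟩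
      · exact Or.inr (.crNoEvade h1 hEv)
    · exact Or.inr (.crBoth h1 h2)

end Interaction
/-- Kleene-star of a predicate on lists. -/
inductive StarL {α : Type} (P : List α → Prop) : List α → Prop
  | nil : StarL P []
  | append {u w : List α} : P u → StarL P w → StarL P (u ++ w)

namespace Interaction
variable {L M : Type}

/-- Generalized weak-sequencing merge of two traces: a letter of the second
trace may be emitted only if the remainder of the first trace avoids the
constraint set of that letter. -/
inductive MergeW (f : MyAction L M → Set L) :
    List (MyAction L M) → List (MyAction L M) → List (MyAction L M) → Prop
  | nil : MergeW f [] [] []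
  | left {a t1 t2 t} : MergeW f t1 t2 t → MergeW f (a :: t1) t2 (a :: t)
  | right {a t1 t2 t} : (∀ b ∈ t1, b.lifeline ∉ f a) → MergeW f t1 t2 t →
      MergeW f t1 (a :: t2) (a :: t)

theorem MergeW.length_eq {f : MyAction L M → Set L} {t1 t2 t} (h : MergeW f t1 t2 t) :
    t.length = t1.length + t2.length := by
  induction h with
  | nil => rfl
  | left _ ih => simp [ih]; omega
  | right _ _ ih => simp [ih]; omega

theorem MergeW.mem_iff {f : MyAction L M → Set L} {t1 t2 t} (h : MergeW f t1 t2 t)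
    {b : MyAction L M} : b ∈ t ↔ b ∈ t1 ∨ b ∈ t2 := by
  induction h with
  | nil => simp
  | left _ ih => simp [ih]; tauto
  | right _ _ ih => simp [ih]; tauto

theorem sem_nil_iff {i : Interaction L M} : Sem i [] ↔ Evades i Set.univ := by
  constructor
  · intro h; cases h with | nil h => exact h
  · exact Sem.nil

theorem sem_cons_iff {i : Interaction L M} {a t} :
    Sem i (a :: t) ↔ ∃ i', Exec i a i' ∧ Sem i' t := by
  constructor
  · intro h; cases h with | cons he hs => exact ⟨_, he, hs⟩
  · rintro ⟨i', he, hs⟩; exact .cons he hs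

theorem sem_empty_iff {t : List (MyAction L M)} :
    Sem (Interaction.empty : Interaction L M) t ↔ t = [] := by
  constructor
  · intro h
    cases h with
    | nil => rfl
    | cons he _ => cases he
  · rintro rfl; exact .nil (.empty _)

theorem sem_act_iff {a : MyAction L M} {t} : Sem (.act a) t ↔ t = [a] := by
  constructor
  · intro h
    cases h with
    | nil h => exact absurd (Set.mem_univ _) h.act_inv
    | cons he hs => cases he; rw [sem_empty_iff.mp hs]
  · rintro rfl; exact .cons (.act a) (.nil (.empty _))

theorem sem_avoid_evades : ∀ {i : Interaction L M} {t}, Sem i t →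
    ∀ {s : Set L}, (∀ b ∈ t, b.lifeline ∉ s) → Evades i s := by
  intro i t h
  induction h with
  | nil h => exact fun _ => h.anti (Set.subset_univ _)
  | cons he _ ih =>
    intro s hav
    exact exec_reflects_evades he (hav _ List.mem_cons_self)
      (ih fun b hb => hav b (List.mem_cons_of_mem _ hb))

end Interaction
namespace Interaction
variable {L M : Type}

theorem grand : ∀ n : ℕ,
    (∀ t : List (MyAction L M), t.length ≤ n → ∀ i1 i2 : Interaction L M,
      Sem (.alt i1 i2) t ↔ Sem i1 t ∨ Sem i2 t) ∧
    (∀ t : List (MyAction L M), t.length ≤ n → ∀ i1 i2 : Interaction L M,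
      Sem (.strict i1 i2) t ↔ ∃ u v, t = u ++ v ∧ Sem i1 u ∧ Sem i2 v) ∧
    (∀ t : List (MyAction L M), t.length ≤ n → ∀ i1 : Interaction L M,
      Sem (.loopS i1) t ↔ StarL (Sem i1) t) ∧
    (∀ t : List (MyAction L M), t.length ≤ n → ∀ (ℓ : Set L) (i1 i2 : Interaction L M),
      Sem (.cr ℓ i1 i2) t ↔ ∃ t1 t2, Sem i1 t1 ∧ Sem i2 t2 ∧
        MergeW (fun a => {a.lifeline} \ ℓ) t1 t2 t) ∧
    (∀ (i : Interaction L M) (t : List (MyAction L M)), t.length ≤ n → ∀ s i',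
      Prune i s i' → (Sem i' t ↔ (Sem i t ∧ ∀ b ∈ t, b.lifeline ∉ s))) := by
  intro n
  induction n using Nat.strong_induction_on with
  | _ n ih =>
  have A' : ∀ t : List (MyAction L M), t.length < n → ∀ i1 i2 : Interaction L M,
      Sem (.alt i1 i2) t ↔ Sem i1 t ∨ Sem i2 t :=
    fun t h => (ih _ h).1 t le_rfl
  have B' : ∀ t : List (MyAction L M), t.length < n → ∀ i1 i2 : Interaction L M,
      Sem (.strict i1 i2) t ↔ ∃ u v, t = u ++ v ∧ Sem i1 u ∧ Sem i2 v :=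
    fun t h => (ih _ h).2.1 t le_rfl
  have C' : ∀ t : List (MyAction L M), t.length < n → ∀ i1 : Interaction L M,
      Sem (.loopS i1) t ↔ StarL (Sem i1) t :=
    fun t h => (ih _ h).2.2.1 t le_rfl
  have D' : ∀ t : List (MyAction L M), t.length < n → ∀ (ℓ : Set L)
      (i1 i2 : Interaction L M), Sem (.cr ℓ i1 i2) t ↔ ∃ t1 t2, Sem i1 t1 ∧ Sem i2 t2 ∧
        MergeW (fun a => {a.lifeline} \ ℓ) t1 t2 t :=
    fun t h => (ih _ h).2.2.2.1 t le_rfl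
  have E' : ∀ (i : Interaction L M) (t : List (MyAction L M)), t.length < n → ∀ s i',
      Prune i s i' → (Sem i' t ↔ (Sem i t ∧ ∀ b ∈ t, b.lifeline ∉ s)) :=
    fun i t h => (ih _ h).2.2.2.2 i t le_rfl
  -- (A) alternative
  have hA : ∀ t : List (MyAction L M), t.length ≤ n → ∀ i1 i2 : Interaction L M,
      Sem (.alt i1 i2) t ↔ Sem i1 t ∨ Sem i2 t := by
    intro t ht i1 i2
    cases t with
    | nil =>
      rw [sem_nil_iff, sem_nil_iff, sem_nil_iff]
      exact ⟨Evades.alt_inv, fun h => h.elim Evades.altL Evades.altR⟩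
    | cons a t' =>
      have ht' : t'.length < n := Nat.lt_of_lt_of_le (Nat.lt_succ_self _) ht
      constructor
      · intro h
        cases h with | cons he hs =>
        cases he with
        | altChoiceL he1 _ => exact Or.inl (.cons he1 hs)
        | altChoiceR he2 _ => exact Or.inr (.cons he2 hs)
        | altDelay he1 he2 =>
          rcases (A' t' ht' _ _).mp hs with h | h
          · exact Or.inl (.cons he1 h)
          · exact Or.inr (.cons he2 h)
      · intro h
        rcases h with h | h
        · cases h with | cons he1 hs =>
          rcases exec_total i2 a with ⟨m, hem⟩ | hnm
          · exact .cons (.altDelay he1 hem) ((A' t' ht' _ _).mpr (Or.inl hs))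
          · exact .cons (.altChoiceL he1 hnm) hs
        · cases h with | cons he2 hs =>
          rcases exec_total i1 a with ⟨m, hem⟩ | hnm
          · exact .cons (.altDelay hem he2) ((A' t' ht' _ _).mpr (Or.inr hs))
          · exact .cons (.altChoiceR he2 hnm) hs
  -- (B) strict
  have hB : ∀ t : List (MyAction L M), t.length ≤ n → ∀ i1 i2 : Interaction L M,
      Sem (.strict i1 i2) t ↔ ∃ u v, t = u ++ v ∧ Sem i1 u ∧ Sem i2 v := by
    intro t ht i1 i2
    constructor
    · intro h
      cases t with
      | nil =>
        rcases (sem_nil_iff.mp h).strict_inv with ⟨h1, h2⟩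
        exact ⟨[], [], rfl, .nil h1, .nil h2⟩
      | cons a t' =>
        have ht' : t'.length < n := Nat.lt_of_lt_of_le (Nat.lt_succ_self _) ht
        cases h with | cons he hs =>
        cases he with
        | strictL he1 =>
          rcases (B' t' ht' _ _).mp hs with ⟨u, v, rfl, hu, hv⟩
          exact ⟨a :: u, v, rfl, .cons he1 hu, hv⟩
        | strictR he2 hEv =>
          exact ⟨[], a :: t', rfl, .nil hEv, .cons he2 hs⟩
    · rintro ⟨u, v, rfl, hu, hv⟩
      cases u with
      | nil =>
        have hEv : Evades i1 Set.univ := sem_nil_iff.mp hu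
        cases v with
        | nil => exact .nil (.strict hEv (sem_nil_iff.mp hv))
        | cons a v' =>
          cases hv with | cons he2 hs =>
          exact .cons (.strictR he2 hEv) hs
      | cons a u' =>
        cases hu with | cons he1 hs =>
        have hlt : (u' ++ v).length < n := by
          simp only [List.cons_append, List.length_cons] at ht
          simp only [List.length_append] at ht ⊢
          omega
        exact .cons (.strictL he1) ((B' _ hlt _ _).mpr ⟨u', v, rfl, hs, hv⟩)
  -- (C) loop
  have hC : ∀ t : List (MyAction L M), t.length ≤ n → ∀ i1 : Interaction L M,
      Sem (.loopS i1) t ↔ StarL (Sem i1) t := by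
    intro t ht i1
    constructor
    · intro h
      cases t with
      | nil => exact .nil
      | cons a t' =>
        have ht' : t'.length < n := Nat.lt_of_lt_of_le (Nat.lt_succ_self _) ht
        cases h with | cons he hs =>
        cases he with | loop he1 =>
        rcases (B' t' ht' _ _).mp hs with ⟨u, v, huv, hu, hv⟩
        have hvlt : v.length < n := by
          have := congrArg List.length huv
          simp only [List.length_append] at this
          omega
        have hstar : StarL (Sem i1) v := (C' v hvlt _).mp hv
        have : (a :: t') = (a :: u) ++ v := by rw [huv]; rfl
        rw [this]
        exact .append (.cons he1 hu) hstar
    · intro h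
      have key : ∀ w : List (MyAction L M), StarL (Sem i1) w → w.length ≤ n →
          Sem (.loopS i1) w := by
        intro w hw
        induction hw with
        | nil => exact fun _ => .nil (.loopS _ _)
        | @append u w hu hsw ihw =>
          intro hlen
          cases u with
          | nil => simpa using ihw (by simpa using hlen)
          | cons a u' =>
            cases hu with | cons he1 hs =>
            have hlt : (u' ++ w).length < n := by
              simp only [List.cons_append, List.length_cons, List.length_append]
                at hlen ⊢
              omega
            have hw' : w.length ≤ n := by
              simp only [List.cons_append, List.length_cons, List.length_append]
                at hlen
              omega
            show Sem (.loopS i1) (a :: (u' ++ w))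
            exact .cons (.loop he1)
              ((B' _ hlt _ _).mpr ⟨u', w, rfl, hs, ihw hw'⟩)
      exact key t h ht
  -- (D) cr
  have hD : ∀ t : List (MyAction L M), t.length ≤ n → ∀ (ℓ : Set L)
      (i1 i2 : Interaction L M), Sem (.cr ℓ i1 i2) t ↔ ∃ t1 t2, Sem i1 t1 ∧ Sem i2 t2 ∧
        MergeW (fun a => {a.lifeline} \ ℓ) t1 t2 t := by
    intro t ht ℓ i1 i2
    constructor
    · intro h
      cases t with
      | nil =>
        rcases (sem_nil_iff.mp h).cr_inv with ⟨h1, h2⟩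
        exact ⟨[], [], .nil h1, .nil h2, .nil⟩
      | cons a t' =>
        have ht' : t'.length < n := Nat.lt_of_lt_of_le (Nat.lt_succ_self _) ht
        cases h with | cons he hs =>
        cases he with
        | crL he1 =>
          rcases (D' t' ht' _ _ _).mp hs with ⟨t1, t2, h1, h2, hm⟩
          exact ⟨a :: t1, t2, .cons he1 h1, h2, .left hm⟩
        | crR he2 hq =>
          rcases (D' t' ht' _ _ _).mp hs with ⟨t1, t2, h1, h2, hm⟩
          have hle := hm.length_eq
          have ht1 : t1.length < n := by omega
          rcases (E' _ t1 ht1 _ _ hq).mp h1 with ⟨h1', hav⟩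
          exact ⟨t1, a :: t2, h1', .cons he2 h2, .right hav hm⟩
    · rintro ⟨t1, t2, h1, h2, hm⟩
      cases hm with
      | nil => exact .nil (.cr (sem_nil_iff.mp h1) (sem_nil_iff.mp h2))
      | @left a t1' t2' t'' hm' =>
        have ht'' : t''.length < n := Nat.lt_of_lt_of_le (Nat.lt_succ_self _) ht
        cases h1 with | cons he1 hs1 =>
        exact .cons (.crL he1) ((D' _ ht'' _ _ _).mpr ⟨_, _, hs1, h2, hm'⟩)
      | @right a _ t2' t'' hav hm' =>
        have ht'' : t''.length < n := Nat.lt_of_lt_of_le (Nat.lt_succ_self _) ht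
        cases h2 with | cons he2 hs2 =>
        have hEv : Evades i1 ({a.lifeline} \ ℓ) := sem_avoid_evades h1 hav
        rcases prune_exists i1 _ hEv with ⟨q1, hq⟩
        have hle := hm'.length_eq
        have ht1 : t1.length < n := by omega
        have hs1' : Sem q1 t1 := (E' i1 t1 ht1 _ _ hq).mpr ⟨h1, hav⟩
        exact .cons (.crR he2 hq) ((D' _ ht'' _ _ _).mpr ⟨t1, t2', hs1', hs2, hm'⟩)
  -- (E) pruning
  have hE : ∀ (i : Interaction L M) (t : List (MyAction L M)), t.length ≤ n → ∀ s i',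
      Prune i s i' → (Sem i' t ↔ (Sem i t ∧ ∀ b ∈ t, b.lifeline ∉ s)) := by
    intro i
    induction i with
    | empty =>
      intro t ht s i' hp
      cases hp
      rw [sem_empty_iff]
      constructor
      · rintro rfl; exact ⟨rfl, by simp⟩
      · rintro ⟨h, _⟩; exact h
    | act a0 =>
      intro t ht s i' hp
      cases hp with | act _ _ ha =>
      rw [sem_act_iff]
      constructor
      · rintro rfl; exact ⟨rfl, by simpa using ha⟩
      · rintro ⟨h, _⟩; exact h
    | loopS i1 ih1 =>
      intro t ht s i' hp
      cases hp with
      | @loopS _ j1 _ hp1 =>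
        rw [hC t ht, hC t ht]
        constructor
        · intro h
          have key : ∀ w : List (MyAction L M), StarL (Sem j1) w → w.length ≤ n →
              StarL (Sem i1) w ∧ (∀ b ∈ w, b.lifeline ∉ s) := by
            intro w hw
            induction hw with
            | nil => exact fun _ => ⟨.nil, by simp⟩
            | @append u w hu hsw ihw =>
              intro hlen
              simp only [List.length_append] at hlen
              have hu' := (ih1 u (by omega) s j1 hp1).mp hu
              have hw' := ihw (by omega)
              refine ⟨.append hu'.1 hw'.1, ?_⟩
              intro b hb
              rcases List.mem_append.mp hb with hbb | hbb
              exacts [hu'.2 b hbb, hw'.2 b hbb]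
          exact key t h ht
        · rintro ⟨h, hav⟩
          have key : ∀ w : List (MyAction L M), StarL (Sem i1) w → w.length ≤ n →
              (∀ b ∈ w, b.lifeline ∉ s) → StarL (Sem j1) w := by
            intro w hw
            induction hw with
            | nil => exact fun _ _ => .nil
            | @append u w hu hsw ihw =>
              intro hlen hav2
              simp only [List.length_append] at hlen
              exact .append
                ((ih1 u (by omega) s j1 hp1).mpr
                  ⟨hu, fun b hb => hav2 b (List.mem_append.mpr (Or.inl hb))⟩)
                (ihw (by omega) (fun b hb => hav2 b (List.mem_append.mpr (Or.inr hb))))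
          exact key t h ht hav
      | loopSElim hne =>
        rw [sem_empty_iff]
        constructor
        · rintro rfl; exact ⟨.nil (.loopS _ _), by simp⟩
        · rintro ⟨h, hav⟩
          have hstar := (hC t ht _).mp h
          have key : ∀ w : List (MyAction L M), StarL (Sem i1) w →
              (∀ b ∈ w, b.lifeline ∉ s) → w = [] := by
            intro w hw
            induction hw with
            | nil => exact fun _ => rfl
            | @append u w hu hsw ihw =>
              intro hav2
              cases u with
              | nil => simpa using ihw (fun b hb => hav2 b (by simpa using hb))
              | cons a u' =>
                exact absurd (sem_avoid_evades hu
                  (fun b hb => hav2 b (List.mem_append.mpr (Or.inl hb)))) hne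
          exact key t hstar hav
    | strict i1 i2 ih1 ih2 =>
      intro t ht s i' hp
      cases hp with | @strict _ _ j1 j2 _ hp1 hp2 =>
      rw [hB t ht, hB t ht]
      constructor
      · rintro ⟨u, v, rfl, hu, hv⟩
        simp only [List.length_append] at ht
        rcases (ih1 u (by omega) s j1 hp1).mp hu with ⟨hu', havu⟩
        rcases (ih2 v (by omega) s j2 hp2).mp hv with ⟨hv', havv⟩
        refine ⟨⟨u, v, rfl, hu', hv'⟩, ?_⟩
        intro b hb
        rcases List.mem_append.mp hb with hbb | hbb
        exacts [havu b hbb, havv b hbb]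
      · rintro ⟨⟨u, v, rfl, hu, hv⟩, hav⟩
        simp only [List.length_append] at ht
        exact ⟨u, v, rfl,
          (ih1 u (by omega) s j1 hp1).mpr
            ⟨hu, fun b hb => hav b (List.mem_append.mpr (Or.inl hb))⟩,
          (ih2 v (by omega) s j2 hp2).mpr
            ⟨hv, fun b hb => hav b (List.mem_append.mpr (Or.inr hb))⟩⟩
    | alt i1 i2 ih1 ih2 =>
      intro t ht s i' hp
      cases hp with
      | altL hp1 hne2 =>
        rw [ih1 t ht s _ hp1, hA t ht]
        constructor
        · rintro ⟨h, hav⟩; exact ⟨Or.inl h, hav⟩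
        · rintro ⟨h | h, hav⟩
          · exact ⟨h, hav⟩
          · exact absurd (sem_avoid_evades h hav) hne2
      | altR hp2 hne1 =>
        rw [ih2 t ht s _ hp2, hA t ht]
        constructor
        · rintro ⟨h, hav⟩; exact ⟨Or.inr h, hav⟩
        · rintro ⟨h | h, hav⟩
          · exact absurd (sem_avoid_evades h hav) hne1
          · exact ⟨h, hav⟩
      | @altBoth _ _ j1 j2 _ hp1 hp2 =>
        rw [hA t ht, hA t ht, ih1 t ht s j1 hp1, ih2 t ht s j2 hp2]
        tauto
    | cr ℓ i1 i2 ih1 ih2 =>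
      intro t ht s i' hp
      cases hp with | @cr _ _ j1 j2 _ _ hp1 hp2 =>
      rw [hD t ht, hD t ht]
      constructor
      · rintro ⟨t1, t2, h1, h2, hm⟩
        have hle := hm.length_eq
        rcases (ih1 t1 (by omega) s j1 hp1).mp h1 with ⟨h1', hav1⟩
        rcases (ih2 t2 (by omega) s j2 hp2).mp h2 with ⟨h2', hav2⟩
        refine ⟨⟨t1, t2, h1', h2', hm⟩, ?_⟩
        intro b hb
        rcases hm.mem_iff.mp hb with hbb | hbb
        exacts [hav1 b hbb, hav2 b hbb]
      · rintro ⟨⟨t1, t2, h1, h2, hm⟩, hav⟩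
        have hle := hm.length_eq
        exact ⟨t1, t2,
          (ih1 t1 (by omega) s j1 hp1).mpr
            ⟨h1, fun b hb => hav b (hm.mem_iff.mpr (Or.inl hb))⟩,
          (ih2 t2 (by omega) s j2 hp2).mpr
            ⟨h2, fun b hb => hav b (hm.mem_iff.mpr (Or.inr hb))⟩, hm⟩
  exact ⟨hA, hB, hC, hD, hE⟩

end Interaction
namespace Interaction
variable {L M : Type}

theorem sem_alt_iff {i1 i2 : Interaction L M} {t} :
    Sem (.alt i1 i2) t ↔ Sem i1 t ∨ Sem i2 t :=
  (grand t.length).1 t le_rfl i1 i2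

theorem sem_strict_iff {i1 i2 : Interaction L M} {t} :
    Sem (.strict i1 i2) t ↔ ∃ u v, t = u ++ v ∧ Sem i1 u ∧ Sem i2 v :=
  (grand t.length).2.1 t le_rfl i1 i2

theorem sem_loop_iff {i1 : Interaction L M} {t} :
    Sem (.loopS i1) t ↔ StarL (Sem i1) t :=
  (grand t.length).2.2.1 t le_rfl i1

theorem sem_cr_iff {ℓ : Set L} {i1 i2 : Interaction L M} {t} :
    Sem (.cr ℓ i1 i2) t ↔ ∃ t1 t2, Sem i1 t1 ∧ Sem i2 t2 ∧
      MergeW (fun a => {a.lifeline} \ ℓ) t1 t2 t :=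
  (grand t.length).2.2.2.1 t le_rfl ℓ i1 i2

theorem mergeW_univ_iff {t1 t2 t : List (MyAction L M)} :
    MergeW (fun _ => (Set.univ : Set L)) t1 t2 t ↔ t = t1 ++ t2 := by
  constructor
  · intro h
    induction h with
    | nil => rfl
    | left _ ih => simp [ih]
    | @right a t1 t2 t hcond _ ih =>
      cases t1 with
      | nil => simp [ih]
      | cons b t1' => exact absurd (Set.mem_univ _) (hcond b List.mem_cons_self)
  · rintro rfl
    induction t1 with
    | nil =>
      induction t2 with
      | nil => exact .nil
      | cons b t2' ih => exact .right (by simp) ih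
    | cons b t1' ih => exact .left ih

end Interaction

section NFAPath
variable {α σ : Type}

/-- A path in an NFA from a state to a state, labelled by a word. -/
inductive NPath (N : NFA α σ) : σ → List α → σ → Prop
  | nil (p : σ) : NPath N p [] p
  | cons {p : σ} {a : α} {q : σ} {x : List α} {r : σ} :
      q ∈ N.step p a → NPath N q x r → NPath N p (a :: x) r

theorem NPath.append {N : NFA α σ} {p u q v r} (h1 : NPath N p u q)
    (h2 : NPath N q v r) : NPath N p (u ++ v) r := by
  induction h1 with
  | nil => exact h2
  | cons hs _ ih => exact .cons hs (ih h2)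

theorem mem_evalFrom_iff (N : NFA α σ) :
    ∀ (x : List α) (S : Set σ) (q : σ),
      q ∈ N.evalFrom S x ↔ ∃ p ∈ S, NPath N p x q := by
  intro x
  induction x with
  | nil =>
    intro S q
    constructor
    · intro h; exact ⟨q, h, .nil q⟩
    · rintro ⟨p, hp, hpath⟩; cases hpath; exact hp
  | cons a x ihx =>
    intro S q
    have : N.evalFrom S (a :: x) = N.evalFrom (N.stepSet S a) x := rfl
    rw [this, ihx]
    constructor
    · rintro ⟨p, hp, hpath⟩
      rcases N.mem_stepSet.mp hp with ⟨r, hr, hstep⟩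
      exact ⟨r, hr, .cons hstep hpath⟩
    · rintro ⟨p, hp, hpath⟩
      cases hpath with
      | cons hstep htail =>
        exact ⟨_, N.mem_stepSet.mpr ⟨p, hp, hstep⟩, htail⟩

theorem mem_accepts_path (N : NFA α σ) (x : List α) :
    x ∈ N.accepts ↔ ∃ p ∈ N.start, ∃ q ∈ N.accept, NPath N p x q := by
  rw [NFA.mem_accepts]
  simp only [mem_evalFrom_iff]
  tauto

end NFAPath
section Constructions
variable {α : Type}

/-- NFA accepting only the empty word. -/
def nfaNil (α : Type) : NFA α Unit :=
  ⟨fun _ _ => ∅, Set.univ, Set.univ⟩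

theorem nfaNil_accepts (x : List α) : x ∈ (nfaNil α).accepts ↔ x = [] := by
  rw [mem_accepts_path]
  constructor
  · rintro ⟨p, _, q, _, hpath⟩
    cases hpath with
    | nil => rfl
    | cons hstep _ => exact absurd hstep (by simp [nfaNil])
  · rintro rfl
    exact ⟨Unit.unit, trivial, Unit.unit, trivial, .nil _⟩

/-- NFA accepting exactly the single-letter word `[a]`. -/
def nfaAct (a : α) : NFA α Bool :=
  ⟨fun q b => {r | q = false ∧ b = a ∧ r = true}, {false}, {true}⟩

theorem nfaAct_accepts (a : α) (x : List α) : x ∈ (nfaAct a).accepts ↔ x = [a] := by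
  rw [mem_accepts_path]
  constructor
  · rintro ⟨p, hp, q, hq, hpath⟩
    simp only [nfaAct, Set.mem_singleton_iff] at hp hq
    subst hp; subst hq
    cases hpath with
    | cons hstep htail =>
      obtain ⟨-, rfl, rfl⟩ := hstep
      cases htail with
      | nil => rfl
      | cons hstep2 _ => exact absurd hstep2.1 (by simp)
  · rintro rfl
    exact ⟨false, rfl, true, rfl, .cons ⟨rfl, rfl, rfl⟩ (.nil true)⟩

variable {σ1 σ2 : Type}

/-- Disjoint-union NFA for the union of two languages. -/
def nfaUnion (N1 : NFA α σ1) (N2 : NFA α σ2) : NFA α (σ1 ⊕ σ2) where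
  step q a := Sum.elim (fun p => Sum.inl '' N1.step p a) (fun p => Sum.inr '' N2.step p a) q
  start := Sum.inl '' N1.start ∪ Sum.inr '' N2.start
  accept := Sum.inl '' N1.accept ∪ Sum.inr '' N2.accept

theorem nfaUnion_path_inl {N1 : NFA α σ1} {N2 : NFA α σ2} :
    ∀ (x : List α) (p : σ1) (r : σ1 ⊕ σ2), NPath (nfaUnion N1 N2) (Sum.inl p) x r →
      ∃ q, r = Sum.inl q ∧ NPath N1 p x q := by
  intro x
  induction x with
  | nil =>
    intro p r hpath
    cases hpath; exact ⟨p, rfl, .nil p⟩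
  | cons a x ihx =>
    intro p r hpath
    cases hpath with
    | cons hstep htail =>
      obtain ⟨p2, hp2, rfl⟩ := hstep
      obtain ⟨q, rfl, hq⟩ := ihx _ _ htail
      exact ⟨q, rfl, .cons hp2 hq⟩

theorem nfaUnion_path_inr {N1 : NFA α σ1} {N2 : NFA α σ2} :
    ∀ (x : List α) (p : σ2) (r : σ1 ⊕ σ2), NPath (nfaUnion N1 N2) (Sum.inr p) x r →
      ∃ q, r = Sum.inr q ∧ NPath N2 p x q := by
  intro x
  induction x with
  | nil =>
    intro p r hpath
    cases hpath; exact ⟨p, rfl, .nil p⟩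
  | cons a x ihx =>
    intro p r hpath
    cases hpath with
    | cons hstep htail =>
      obtain ⟨p2, hp2, rfl⟩ := hstep
      obtain ⟨q, rfl, hq⟩ := ihx _ _ htail
      exact ⟨q, rfl, .cons hp2 hq⟩

theorem nfaUnion_path_inl' {N1 : NFA α σ1} {N2 : NFA α σ2} {x : List α} {p q : σ1}
    (h : NPath N1 p x q) : NPath (nfaUnion N1 N2) (Sum.inl p) x (Sum.inl q) := by
  induction h with
  | nil => exact .nil _
  | cons hs _ ih => exact .cons ⟨_, hs, rfl⟩ ih

theorem nfaUnion_path_inr' {N1 : NFA α σ1} {N2 : NFA α σ2} {x : List α} {p q : σ2}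
    (h : NPath N2 p x q) : NPath (nfaUnion N1 N2) (Sum.inr p) x (Sum.inr q) := by
  induction h with
  | nil => exact .nil _
  | cons hs _ ih => exact .cons ⟨_, hs, rfl⟩ ih

theorem nfaUnion_accepts (N1 : NFA α σ1) (N2 : NFA α σ2) (x : List α) :
    x ∈ (nfaUnion N1 N2).accepts ↔ x ∈ N1.accepts ∨ x ∈ N2.accepts := by
  rw [mem_accepts_path]
  constructor
  · rintro ⟨p, hp, q, hq, hpath⟩
    rcases hp with ⟨p1, hp1, rfl⟩ | ⟨p2, hp2, rfl⟩
    · obtain ⟨q1, rfl, hq1⟩ := nfaUnion_path_inl _ _ _ hpath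
      rcases hq with ⟨a1, ha1, heq⟩ | ⟨a2, ha2, heq⟩
      · cases heq
        exact Or.inl ((mem_accepts_path N1 x).mpr ⟨p1, hp1, q1, ha1, hq1⟩)
      · cases heq
    · obtain ⟨q2, rfl, hq2⟩ := nfaUnion_path_inr _ _ _ hpath
      rcases hq with ⟨a1, ha1, heq⟩ | ⟨a2, ha2, heq⟩
      · cases heq
      · cases heq
        exact Or.inr ((mem_accepts_path N2 x).mpr ⟨p2, hp2, q2, ha2, hq2⟩)
  · rintro (h | h)
    · obtain ⟨p, hp, q, hq, hpath⟩ := (mem_accepts_path N1 x).mp h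
      exact ⟨Sum.inl p, Or.inl ⟨p, hp, rfl⟩, Sum.inl q, Or.inl ⟨q, hq, rfl⟩,
        nfaUnion_path_inl' hpath⟩
    · obtain ⟨p, hp, q, hq, hpath⟩ := (mem_accepts_path N2 x).mp h
      exact ⟨Sum.inr p, Or.inr ⟨p, hp, rfl⟩, Sum.inr q, Or.inr ⟨q, hq, rfl⟩,
        nfaUnion_path_inr' hpath⟩

end Constructions
namespace Interaction
variable {L M : Type} {σ1 σ2 : Type}

/-- `MergeW` with an explicit accumulated constraint set. -/
inductive MergeWT (f : MyAction L M → Set L) :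
    Set L → List (MyAction L M) → List (MyAction L M) → List (MyAction L M) → Prop
  | nil (T) : MergeWT f T [] [] []
  | left {T a t1 t2 t} : a.lifeline ∉ T → MergeWT f T t1 t2 t →
      MergeWT f T (a :: t1) t2 (a :: t)
  | right {T a t1 t2 t} : MergeWT f (T ∪ f a) t1 t2 t → MergeWT f T t1 (a :: t2) (a :: t)

theorem MergeWT.toW {f : MyAction L M → Set L} {T t1 t2 t} (h : MergeWT f T t1 t2 t) :
    MergeW f t1 t2 t ∧ ∀ b ∈ t1, b.lifeline ∉ T := by
  induction h with
  | nil => exact ⟨.nil, by simp⟩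
  | left ha _ ih =>
    refine ⟨.left ih.1, ?_⟩
    intro b hb
    rcases List.mem_cons.mp hb with rfl | hb
    · exact ha
    · exact ih.2 b hb
  | right _ ih =>
    exact ⟨.right (fun b hb hf => ih.2 b hb (Set.mem_union_right _ hf)) ih.1,
      fun b hb hT => ih.2 b hb (Set.mem_union_left _ hT)⟩

theorem MergeW.toT {f : MyAction L M → Set L} {t1 t2 t} (h : MergeW f t1 t2 t) :
    ∀ T, (∀ b ∈ t1, b.lifeline ∉ T) → MergeWT f T t1 t2 t := by
  induction h with
  | nil => exact fun T _ => .nil T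
  | left _ ih =>
    intro T hav
    exact .left (hav _ List.mem_cons_self)
      (ih T (fun b hb => hav b (List.mem_cons_of_mem _ hb)))
  | right hcond _ ih =>
    intro T hav
    refine .right (ih _ ?_)
    intro b hb hc
    rcases Set.mem_union _ _ _ |>.mp hc with h | h
    · exact hav b hb h
    · exact hcond b hb h

/-- NFA for the generalized weak-sequencing merge of two languages. -/
def nfaMerge (f : MyAction L M → Set L) (N1 : NFA (MyAction L M) σ1)
    (N2 : NFA (MyAction L M) σ2) : NFA (MyAction L M) (σ1 × σ2 × Set L) where
  step r a :=
    {r' | (∃ p', p' ∈ N1.step r.1 a ∧ a.lifeline ∉ r.2.2 ∧ r' = (p', r.2.1, r.2.2)) ∨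
          (∃ q', q' ∈ N2.step r.2.1 a ∧ r' = (r.1, q', r.2.2 ∪ f a))}
  start := {r | r.1 ∈ N1.start ∧ r.2.1 ∈ N2.start ∧ r.2.2 = (∅ : Set L)}
  accept := {r | r.1 ∈ N1.accept ∧ r.2.1 ∈ N2.accept}

theorem nfaMerge_path {f : MyAction L M → Set L} {N1 : NFA (MyAction L M) σ1}
    {N2 : NFA (MyAction L M) σ2} :
    ∀ (x : List (MyAction L M)) (p : σ1) (q : σ2) (T : Set L) (r' : σ1 × σ2 × Set L),
      NPath (nfaMerge f N1 N2) (p, q, T) x r' →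
      ∃ t1 t2, NPath N1 p t1 r'.1 ∧ NPath N2 q t2 r'.2.1 ∧ MergeWT f T t1 t2 x := by
  intro x
  induction x with
  | nil =>
    intro p q T r' h
    cases h
    exact ⟨[], [], .nil _, .nil _, .nil T⟩
  | cons a x ihx =>
    intro p q T r' h
    cases h with | cons hstep htail =>
    rcases hstep with ⟨p', hp', haT, rfl⟩ | ⟨q', hq', rfl⟩
    · obtain ⟨t1, t2, h1, h2, hm⟩ := ihx p' q T r' htail
      exact ⟨a :: t1, t2, .cons hp' h1, h2, .left haT hm⟩
    · obtain ⟨t1, t2, h1, h2, hm⟩ := ihx p q' (T ∪ f a) r' htail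
      exact ⟨t1, a :: t2, h1, .cons hq' h2, .right hm⟩

theorem nfaMerge_path' {f : MyAction L M → Set L} {N1 : NFA (MyAction L M) σ1}
    {N2 : NFA (MyAction L M) σ2} :
    ∀ {T t1 t2 x}, MergeWT f T t1 t2 x →
    ∀ {p q p' q'}, NPath N1 p t1 p' → NPath N2 q t2 q' →
      ∃ T', NPath (nfaMerge f N1 N2) (p, q, T) x (p', q', T') := by
  intro T t1 t2 x h
  induction h with
  | nil =>
    intro p q p' q' h1 h2
    cases h1; cases h2
    exact ⟨_, .nil _⟩
  | left ha _ ih =>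
    intro p q p' q' h1 h2
    cases h1 with | cons hs1 ht1 =>
    obtain ⟨T', hp⟩ := ih ht1 h2
    exact ⟨T', .cons (Or.inl ⟨_, hs1, ha, rfl⟩) hp⟩
  | right _ ih =>
    intro p q p' q' h1 h2
    cases h2 with | cons hs2 ht2 =>
    obtain ⟨T', hp⟩ := ih h1 ht2
    exact ⟨T', .cons (Or.inr ⟨_, hs2, rfl⟩) hp⟩

theorem nfaMerge_accepts (f : MyAction L M → Set L) (N1 : NFA (MyAction L M) σ1)
    (N2 : NFA (MyAction L M) σ2) (x : List (MyAction L M)) :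
    x ∈ (nfaMerge f N1 N2).accepts ↔
      ∃ t1 t2, t1 ∈ N1.accepts ∧ t2 ∈ N2.accepts ∧ MergeW f t1 t2 x := by
  rw [mem_accepts_path]
  constructor
  · rintro ⟨r0, ⟨h01, h02, h03⟩, rf, ⟨hf1, hf2⟩, hpath⟩
    obtain ⟨p, q, T⟩ := r0
    simp only at h01 h02 h03
    subst h03
    obtain ⟨t1, t2, h1, h2, hm⟩ := nfaMerge_path x p q ∅ rf hpath
    exact ⟨t1, t2, (mem_accepts_path N1 t1).mpr ⟨p, h01, rf.1, hf1, h1⟩,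
      (mem_accepts_path N2 t2).mpr ⟨q, h02, rf.2.1, hf2, h2⟩, hm.toW.1⟩
  · rintro ⟨t1, t2, h1, h2, hm⟩
    obtain ⟨p, hp, p', hp', hpath1⟩ := (mem_accepts_path N1 t1).mp h1
    obtain ⟨q, hq, q', hq', hpath2⟩ := (mem_accepts_path N2 t2).mp h2
    obtain ⟨T', hpath⟩ := nfaMerge_path' (hm.toT ∅ (by simp)) hpath1 hpath2
    exact ⟨(p, q, ∅), ⟨hp, hq, rfl⟩, (p', q', T'), ⟨hp', hq'⟩, hpath⟩

end Interaction

section StarNFA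
variable {α σ : Type}

/-- NFA for the Kleene star of a language. -/
def nfaStar (N : NFA α σ) : NFA α (Option σ) where
  step q a :=
    match q with
    | none => some '' N.stepSet N.start a
    | some p => some '' N.step p a ∪ {r | p ∈ N.accept ∧ r ∈ some '' N.stepSet N.start a}
  start := {none}
  accept := insert none (some '' N.accept)

theorem nfaStar_path_some {N : NFA α σ} :
    ∀ (x : List α) (p : σ) (r : Option σ), NPath (nfaStar N) (some p) x r →
      ∃ g, r = some g := by
  intro x
  induction x with
  | nil => intro p r h; cases h; exact ⟨p, rfl⟩
  | cons a x ihx =>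
    intro p r h
    cases h with | cons hstep htail =>
    rcases hstep with ⟨p2, _, rfl⟩ | ⟨_, p2, _, rfl⟩ <;> exact ihx p2 r htail

theorem nfaStar_path_lift {N : NFA α σ} {x : List α} {p q : σ} (h : NPath N p x q) :
    NPath (nfaStar N) (some p) x (some q) := by
  induction h with
  | nil => exact .nil _
  | cons hs _ ih => exact .cons (Or.inl ⟨_, hs, rfl⟩) ih

theorem nfaStar_key {N : NFA α σ} :
    ∀ (x : List α) (p g : σ), NPath (nfaStar N) (some p) x (some g) → g ∈ N.accept →
      ∃ u w, x = u ++ w ∧ (∃ g2 ∈ N.accept, NPath N p u g2) ∧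
        StarL (· ∈ N.accepts) w := by
  intro x
  induction x with
  | nil =>
    intro p g h hg
    cases h
    exact ⟨[], [], rfl, ⟨_, hg, .nil _⟩, .nil⟩
  | cons a x ihx =>
    intro p g h hg
    cases h with | cons hstep htail =>
    rcases hstep with ⟨p2, hp2, rfl⟩ | ⟨hacc, p2, hp2, rfl⟩
    · obtain ⟨u, w, rfl, ⟨g2, hg2, hu⟩, hw⟩ := ihx p2 g htail hg
      exact ⟨a :: u, w, rfl, ⟨g2, hg2, .cons hp2 hu⟩, hw⟩
    · rcases N.mem_stepSet.mp hp2 with ⟨s, hs, hstep_s⟩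
      obtain ⟨u, w, rfl, ⟨g2, hg2, hu⟩, hw⟩ := ihx p2 g htail hg
      refine ⟨[], a :: (u ++ w), rfl, ⟨p, hacc, .nil p⟩, ?_⟩
      have heq : a :: (u ++ w) = (a :: u) ++ w := rfl
      rw [heq]
      exact .append ((mem_accepts_path N (a :: u)).mpr ⟨s, hs, g2, hg2, .cons hstep_s hu⟩) hw

theorem nfaStar_accepts (N : NFA α σ) (x : List α) :
    x ∈ (nfaStar N).accepts ↔ StarL (· ∈ N.accepts) x := by
  rw [mem_accepts_path]
  constructor
  · rintro ⟨p0, hp0, qf, hqf, hpath⟩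
    rw [show (nfaStar N).start = {none} from rfl, Set.mem_singleton_iff] at hp0
    subst hp0
    cases hpath with
    | nil => exact .nil
    | @cons _ a q' x' _ hstep htail =>
      rcases hstep with ⟨p2, hp2, rfl⟩
      obtain ⟨g, rfl⟩ := nfaStar_path_some _ _ _ htail
      have hg : g ∈ N.accept := by
        rcases Set.mem_insert_iff.mp hqf with heq | ⟨g', hg', heq⟩
        · exact absurd heq (by simp)
        · cases heq; exact hg'
      rcases N.mem_stepSet.mp hp2 with ⟨s, hs, hstep_s⟩
      obtain ⟨u, w, rfl, ⟨g2, hg2, hu⟩, hw⟩ := nfaStar_key _ _ _ htail hg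
      have heq : (a :: (u ++ w) : List α) = (a :: u) ++ w := rfl
      rw [heq]
      exact .append ((mem_accepts_path N (a :: u)).mpr ⟨s, hs, g2, hg2, .cons hstep_s hu⟩) hw
  · intro h
    induction h with
    | nil => exact ⟨none, rfl, none, Set.mem_insert _ _, .nil none⟩
    | @append u w hu hw ihw =>
      obtain ⟨p0, hp0, qf, hqf, hpathw⟩ := ihw
      rw [show (nfaStar N).start = {none} from rfl, Set.mem_singleton_iff] at hp0
      subst hp0
      cases u with
      | nil => exact ⟨none, rfl, qf, hqf, hpathw⟩
      | cons a u' =>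
        obtain ⟨s, hs, g, hg, hpath_u⟩ := (mem_accepts_path N (a :: u')).mp hu
        cases hpath_u with | cons hstep1 ptail =>
        have cont : ∃ rf, rf ∈ (nfaStar N).accept ∧ NPath (nfaStar N) (some g) w rf := by
          cases w with
          | nil => exact ⟨some g, Set.mem_insert_iff.mpr (Or.inr ⟨g, hg, rfl⟩), .nil _⟩
          | cons b w' =>
            cases hpathw with | cons hstepb htailb =>
            rcases hstepb with ⟨r2, hr2, rfl⟩
            exact ⟨qf, hqf, .cons (Or.inr ⟨hg, r2, hr2, rfl⟩) htailb⟩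
        obtain ⟨rf, hrf, contpath⟩ := cont
        refine ⟨none, rfl, rf, hrf, ?_⟩
        show NPath (nfaStar N) none (a :: (u' ++ w)) rf
        exact .cons (⟨_, N.mem_stepSet.mpr ⟨s, hs, hstep1⟩, rfl⟩)
          ((nfaStar_path_lift ptail).append contpath)

end StarNFA

/-- the trace language of every interaction is regular: there is a
nondeterministic finite automaton over the alphabet of actions, with a finite set
of states, whose recognized language is exactly `σ(i)`. -/
theorem sem_regular {L M : Type} [Finite L] [Finite M] (i : Interaction L M) :
    ∃ (Q : Type) (_ : Finite Q) (N : NFA (MyAction L M) Q),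
      N.accepts = {t | Sem i t} := by
  induction i with
  | empty =>
    exact ⟨Unit, inferInstance, nfaNil _,
      Set.ext fun t => (nfaNil_accepts t).trans sem_empty_iff.symm⟩
  | act a =>
    exact ⟨Bool, inferInstance, nfaAct a,
      Set.ext fun t => (nfaAct_accepts a t).trans sem_act_iff.symm⟩
  | alt i1 i2 ih1 ih2 =>
    obtain ⟨Q1, F1, N1, h1⟩ := ih1
    obtain ⟨Q2, F2, N2, h2⟩ := ih2
    haveI := F1; haveI := F2
    refine ⟨Q1 ⊕ Q2, inferInstance, nfaUnion N1 N2, Set.ext fun t => ?_⟩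
    change t ∈ (nfaUnion N1 N2).accepts ↔ _
    rw [nfaUnion_accepts, h1, h2]
    exact sem_alt_iff.symm
  | strict i1 i2 ih1 ih2 =>
    obtain ⟨Q1, F1, N1, h1⟩ := ih1
    obtain ⟨Q2, F2, N2, h2⟩ := ih2
    haveI := F1; haveI := F2
    refine ⟨Q1 × Q2 × Set L, inferInstance,
      Interaction.nfaMerge (fun _ => Set.univ) N1 N2, Set.ext fun t => ?_⟩
    change t ∈ (Interaction.nfaMerge (fun _ => Set.univ) N1 N2).accepts ↔ _
    rw [Interaction.nfaMerge_accepts, h1, h2]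
    constructor
    · rintro ⟨t1, t2, hs1, hs2, hm⟩
      exact Interaction.sem_strict_iff.mpr
        ⟨t1, t2, Interaction.mergeW_univ_iff.mp hm, hs1, hs2⟩
    · intro h
      rcases Interaction.sem_strict_iff.mp h with ⟨u, v, rfl, hu, hv⟩
      exact ⟨u, v, hu, hv, Interaction.mergeW_univ_iff.mpr rfl⟩
  | cr ℓ i1 i2 ih1 ih2 =>
    obtain ⟨Q1, F1, N1, h1⟩ := ih1
    obtain ⟨Q2, F2, N2, h2⟩ := ih2
    haveI := F1; haveI := F2
    refine ⟨Q1 × Q2 × Set L, inferInstance,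
      Interaction.nfaMerge (fun a => {a.lifeline} \ ℓ) N1 N2, Set.ext fun t => ?_⟩
    change t ∈ (Interaction.nfaMerge (fun a => {a.lifeline} \ ℓ) N1 N2).accepts ↔ _
    rw [Interaction.nfaMerge_accepts, h1, h2]
    exact Interaction.sem_cr_iff.symm
  | loopS i1 ih1 =>
    obtain ⟨Q1, F1, N1, h1⟩ := ih1
    haveI := F1
    haveI : Finite (Option Q1) :=
      Finite.of_surjective (Sum.elim some (fun _ : Unit => none))
        (fun o => by
          cases o with
          | none => exact ⟨Sum.inr (), rfl⟩
          | some q => exact ⟨Sum.inl q, rfl⟩)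
    refine ⟨Option Q1, inferInstance, nfaStar N1, Set.ext fun t => ?_⟩
    change t ∈ (nfaStar N1).accepts ↔ _
    rw [nfaStar_accepts, h1]
    exact Interaction.sem_loop_iff.symm
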